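/- arXiv:1508.07881 — 2 statements merged into one kernel-verified Lean document; each statement's English description precedes it below -/
import Mathlib

section
/- Let $E\subset\mathbb{R}^d$ be a Borel set with $\mathcal{L}(E)>0$ and $0<s<d$. For every $\varepsilon>0$ there exists $\delta>0$ such that for every Borel set $F\subset\mathbb{R}^d$ with $\mathcal{L}(E\setminus F) < \delta$, one has $\Gamma_s(F) \le \Gamma_s(E) + \varepsilon$. -/
open MeasureTheory Filter Set
open scoped ENNReal NNReal

/-- The `s`-energy of a measure: `∬ |x-y|^{-s} dμ dμ`. -/
noncomputable def energy {X : Type*} [EMetricSpace X] [MeasurableSpace X] (s : ℝ)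
    (μ : Measure X) : ℝ≥0∞ :=
  ∫⁻ x, ∫⁻ y, edist x y ^ (-s) ∂μ ∂μ

/-- `μ ∈ 𝒫₀(E)`: `μ` is a Borel probability measure which is a finite positive
combination of restrictions of Lebesgue measure to Borel subsets of `E`. -/
def IsRegComb {d : ℕ} (E : Set (EuclideanSpace ℝ (Fin d)))
    (μ : Measure (EuclideanSpace ℝ (Fin d))) : Prop :=
  IsProbabilityMeasure μ ∧
    ∃ (k : ℕ) (c : Fin k → ℝ≥0∞) (F : Fin k → Set (EuclideanSpace ℝ (Fin d))),
      (∀ i, 0 < c i) ∧ (∀ i, MeasurableSet (F i)) ∧ (∀ i, F i ⊆ E) ∧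
      μ = ∑ i, c i • volume.restrict (F i)

open Classical in
/-- The minimal regular `s`-energy `Γ_s(E)` of a set `E ⊆ ℝ^d`. -/
noncomputable def minRegEnergy {d : ℕ} (s : ℝ) (E : Set (EuclideanSpace ℝ (Fin d))) : ℝ≥0∞ :=
  if 0 < volume E then
    ⨅ (μ : Measure (EuclideanSpace ℝ (Fin d))) (_ : IsRegComb E μ), energy s μ
  else ⊤

lemma energy_mono {X : Type*} [EMetricSpace X] [MeasurableSpace X] (s : ℝ) {μ ν : Measure X}
    (h : μ ≤ ν) : energy s μ ≤ energy s ν :=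
  lintegral_mono' h fun _ => lintegral_mono' h le_rfl

lemma energy_smul {X : Type*} [EMetricSpace X] [MeasurableSpace X] (s : ℝ) {c : ℝ≥0∞}
    (hc : c ≠ ⊤) (μ : Measure X) : energy s (c • μ) = c * c * energy s μ := by
  unfold energy
  rw [lintegral_smul_measure]
  have h : ∀ x : X, ∫⁻ y, edist x y ^ (-s) ∂(c • μ) = c * ∫⁻ y, edist x y ^ (-s) ∂μ :=
    fun x => lintegral_smul_measure c _
  simp_rw [h]
  rw [lintegral_const_mul' _ _ hc, mul_assoc, smul_eq_mul]

/-- For a Borel set `E ⊆ ℝ^d` with `L(E) > 0` and `0 < s < d`: for every `ε > 0`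
there is `δ > 0` such that `Γ_s(F) ≤ Γ_s(E) + ε` for all Borel `F` with
`L(E \ F) < δ`. -/
theorem stmt9 (d : ℕ) (s : ℝ) (hs : 0 < s) (hsd : s < d)
    (E : Set (EuclideanSpace ℝ (Fin d))) (hE : MeasurableSet E) (hpos : 0 < volume E)
    (ε : ℝ≥0∞) (hε : 0 < ε) :
    ∃ δ : ℝ≥0∞, 0 < δ ∧ ∀ F : Set (EuclideanSpace ℝ (Fin d)), MeasurableSet F →
      volume (E \ F) < δ → minRegEnergy s F ≤ minRegEnergy s E + ε := by
  by_cases htop : minRegEnergy s E + ε = ⊤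
  · exact ⟨1, one_pos, fun F _ _ => htop ▸ le_top⟩
  obtain ⟨hΓtop, hεtop⟩ := ENNReal.add_ne_top.mp htop
  -- choose a near-optimal measure for E
  have hΓeq : minRegEnergy s E
      = ⨅ (μ : Measure (EuclideanSpace ℝ (Fin d))) (_ : IsRegComb E μ), energy s μ := by
    rw [minRegEnergy, if_pos hpos]
  have hhalf : (0 : ℝ≥0∞) < ε / 2 := ENNReal.half_pos hε.ne'
  have hlt : minRegEnergy s E < minRegEnergy s E + ε / 2 :=
    ENNReal.lt_add_right hΓtop hhalf.ne'
  rw [hΓeq] at hlt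
  obtain ⟨μ, hμreg, hμen⟩ : ∃ μ, IsRegComb E μ ∧ energy s μ < minRegEnergy s E + ε / 2 := by
    simp only [iInf_lt_iff] at hlt
    obtain ⟨μ, h1, h2⟩ := hlt
    rw [← hΓeq] at h2
    exact ⟨μ, h1, h2⟩
  obtain ⟨hprob, k, c, G, hcpos, hGmeas, hGsub, hrep⟩ := hμreg
  -- clean up the representation so that all coefficients are finite
  classical
  set c' : Fin k → ℝ≥0∞ := fun i => if volume (G i) = 0 then 1 else c i with hc'def
  set G' : Fin k → Set (EuclideanSpace ℝ (Fin d)) :=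
    fun i => if volume (G i) = 0 then ∅ else G i with hG'def
  have hterm : ∀ i, c' i • volume.restrict (G' i) = c i • volume.restrict (G i) := by
    intro i
    by_cases h : volume (G i) = 0
    · simp [hc'def, hG'def, h, Measure.restrict_eq_zero.mpr h]
    · simp [hc'def, hG'def, h]
  have hrep' : μ = ∑ i, c' i • volume.restrict (G' i) := by
    rw [hrep]; exact Finset.sum_congr rfl fun i _ => (hterm i).symm
  have hG'meas : ∀ i, MeasurableSet (G' i) := by
    intro i; by_cases h : volume (G i) = 0 <;> simp [hG'def, h, hGmeas i]
  have hG'sub : ∀ i, G' i ⊆ E := by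
    intro i; by_cases h : volume (G i) = 0
    · simp [hG'def, h]
    · simp [hG'def, h, hGsub i]
  have hc'pos : ∀ i, 0 < c' i := by
    intro i; by_cases h : volume (G i) = 0 <;> simp [hc'def, h, hcpos i]
  have happ : ∀ A : Set (EuclideanSpace ℝ (Fin d)), MeasurableSet A →
      μ A = ∑ i, c' i * volume (A ∩ G' i) := by
    intro A hA
    rw [hrep']
    rw [Measure.finset_sum_apply]
    exact Finset.sum_congr rfl fun i _ => by
      rw [Measure.smul_apply, Measure.restrict_apply hA, smul_eq_mul]
  have hc'top : ∀ i, c' i ≠ ⊤ := by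
    intro i
    by_cases h : volume (G i) = 0
    · simp [hc'def, h]
    · have h1 : c' i * volume (G' i) ≤ 1 := by
        have : c' i * volume (G' i) ≤ μ univ := by
          rw [happ univ MeasurableSet.univ]
          refine Finset.single_le_sum (f := fun i => c' i * volume (univ ∩ G' i))
            (fun j _ => zero_le) (Finset.mem_univ i) |>.trans_eq' ?_
          rw [univ_inter]
        rwa [measure_univ] at this
      intro hci
      have hG'pos : 0 < volume (G' i) := by
        simp only [hG'def, if_neg h]
        exact pos_iff_ne_zero.mpr h
      rw [hci, ENNReal.top_mul hG'pos.ne'] at h1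
      exact (lt_irrefl _ (h1.trans_lt ENNReal.one_lt_top)).elim
  set C : ℝ≥0∞ := ∑ i, c' i with hCdef
  have hCtop : C ≠ ⊤ := by
    rw [hCdef]
    exact (ENNReal.sum_lt_top.mpr fun i _ => (hc'top i).lt_top).ne
  -- choose the threshold θ
  set r : ℝ≥0∞ := minRegEnergy s E + ε / 2 with hrdef
  set R : ℝ≥0∞ := minRegEnergy s E + ε with hRdef
  have hr0 : r ≠ 0 := fun h => hhalf.ne' ((add_eq_zero.mp h).2)
  have hrtop : r ≠ ⊤ :=
    ENNReal.add_ne_top.mpr ⟨hΓtop, (ENNReal.half_le_self.trans_lt hεtop.lt_top).ne⟩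
  have hRtop : R ≠ ⊤ := htop
  have hR0 : R ≠ 0 := fun h => hε.ne' ((add_eq_zero.mp h).2)
  have hrR : r < R := by
    rw [hrdef, hRdef]
    exact ENNReal.add_lt_add_left hΓtop (ENNReal.half_lt_self hε.ne' hεtop)
  have hq1 : r / R < 1 :=
    (ENNReal.div_lt_iff (Or.inl hR0) (Or.inl hRtop)).mpr (by rwa [one_mul])
  have hq0 : (0 : ℝ≥0∞) < r / R := ENNReal.div_pos hr0 hRtop
  obtain ⟨u, hqu, hu1⟩ := exists_between hq1
  have hu0 : u ≠ 0 := (hq0.trans hqu).ne'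
  have hutop : u ≠ ⊤ := (hu1.trans ENNReal.one_lt_top).ne
  set θ : ℝ≥0∞ := u ^ (1 / 2 : ℝ) with hθdef
  have hθθ : θ * θ = u := by
    rw [hθdef, ← ENNReal.rpow_add _ _ hu0 hutop]
    norm_num
  have hθ1 : θ < 1 := ENNReal.rpow_lt_one hu1 (by norm_num)
  have hθ0 : θ ≠ 0 := (ENNReal.rpow_pos (pos_iff_ne_zero.mpr hu0) hutop).ne'
  have hθtop : θ ≠ ⊤ := (hθ1.trans ENNReal.one_lt_top).ne
  -- the δ we take
  refine ⟨(1 - θ) / (C + 1), ENNReal.div_pos (tsub_pos_of_lt hθ1).ne'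
    (ENNReal.add_ne_top.mpr ⟨hCtop, ENNReal.one_ne_top⟩), fun F hF hvolF => ?_⟩
  have hC1top : C + 1 ≠ ⊤ := ENNReal.add_ne_top.mpr ⟨hCtop, ENNReal.one_ne_top⟩
  -- μ Fᶜ is small
  have hμFc : μ Fᶜ ≤ 1 - θ := by
    calc μ Fᶜ = ∑ i, c' i * volume (Fᶜ ∩ G' i) := happ Fᶜ hF.compl
    _ ≤ ∑ i, c' i * volume (E \ F) := by
        refine Finset.sum_le_sum fun i _ => mul_le_mul' le_rfl (measure_mono ?_)
        intro x hx
        exact ⟨hG'sub i hx.2, hx.1⟩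
    _ = C * volume (E \ F) := by rw [hCdef, Finset.sum_mul]
    _ ≤ (C + 1) * ((1 - θ) / (C + 1)) :=
        mul_le_mul' (le_add_right le_rfl) hvolF.le
    _ = 1 - θ := ENNReal.mul_div_cancel (by simp) hC1top
  have hθF : θ ≤ μ F := by
    have h1 : μ F + μ Fᶜ = 1 := by
      rw [measure_add_measure_compl hF, measure_univ]
    have h2 : 1 - μ Fᶜ ≤ μ F := by
      rw [tsub_le_iff_right, ← h1]
    calc θ = 1 - (1 - θ) := (ENNReal.sub_sub_cancel ENNReal.one_ne_top hθ1.le).symm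
    _ ≤ 1 - μ Fᶜ := tsub_le_tsub le_rfl hμFc
    _ ≤ μ F := h2
  have hb0 : μ F ≠ 0 := fun h => hθ0 (le_zero_iff.mp (h ▸ hθF))
  have hbtop : μ F ≠ ⊤ := measure_ne_top μ F
  -- F has positive volume
  have hvolFpos : 0 < volume F := by
    by_contra h
    push_neg at h
    have hvF : volume F = 0 := le_antisymm h zero_le
    apply hb0
    rw [happ F hF]
    refine Finset.sum_eq_zero fun i _ => ?_
    rw [measure_mono_null inter_subset_left hvF, mul_zero]
  -- the competitor measure on F
  set ν : Measure (EuclideanSpace ℝ (Fin d)) := (μ F)⁻¹ • μ.restrict F with hνdef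
  have hνprob : IsProbabilityMeasure ν := by
    constructor
    rw [hνdef, Measure.smul_apply, Measure.restrict_apply_univ, smul_eq_mul,
      ENNReal.inv_mul_cancel hb0 hbtop]
  have hνreg : IsRegComb F ν := by
    refine ⟨hνprob, k, fun i => (μ F)⁻¹ * c' i, fun i => F ∩ G' i, ?_, ?_, ?_, ?_⟩
    · exact fun i => ENNReal.mul_pos (ENNReal.inv_ne_zero.mpr hbtop) (hc'pos i).ne'
    · exact fun i => hF.inter (hG'meas i)
    · exact fun i => inter_subset_left
    · refine Measure.ext fun A hA => ?_
      rw [hνdef, Measure.smul_apply, Measure.restrict_apply hA, smul_eq_mul,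
        happ (A ∩ F) (hA.inter hF), Measure.finset_sum_apply, Finset.mul_sum]
      refine Finset.sum_congr rfl fun i _ => ?_
      rw [Measure.smul_apply, Measure.restrict_apply hA, smul_eq_mul, ← mul_assoc,
        inter_assoc]
  -- energy bound
  have hinvtop : (μ F)⁻¹ ≠ ⊤ := ENNReal.inv_ne_top.mpr hb0
  have hen : energy s ν ≤ R := by
    have h1 : energy s ν = (μ F)⁻¹ * (μ F)⁻¹ * energy s (μ.restrict F) :=
      energy_smul s hinvtop _
    have h2 : energy s (μ.restrict F) ≤ energy s μ :=
      energy_mono s Measure.restrict_le_self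
    have h3 : (μ F)⁻¹ ≤ θ⁻¹ := ENNReal.inv_le_inv.mpr hθF
    have h4 : energy s ν ≤ θ⁻¹ * θ⁻¹ * r := by
      rw [h1]
      exact mul_le_mul' (mul_le_mul' h3 h3) (h2.trans hμen.le)
    refine h4.trans ?_
    have h5 : θ⁻¹ * θ⁻¹ * r = r / u := by
      rw [← ENNReal.mul_inv (Or.inl hθ0) (Or.inl hθtop), hθθ, mul_comm,
        ENNReal.div_eq_inv_mul, mul_comm]
    rw [h5]
    rw [ENNReal.div_le_iff hu0 hutop]
    calc r = r / R * R := (ENNReal.div_mul_cancel hR0 hRtop).symm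
    _ ≤ u * R := mul_le_mul' hqu.le le_rfl
    _ = R * u := mul_comm _ _
  -- conclude
  rw [minRegEnergy, if_pos hvolFpos]
  exact le_trans (iInf₂_le ν hνreg) hen
end

section
/- Let $E\subset\mathbb{R}^d$ and $0<s<d$. Then $\Gamma_s(E) = \inf\{I_s(\mu) : \mu \text{ is a Borel probability measure supported on } E \text{ with } \mu \ll \mathcal{L}\}$ (with $\inf\emptyset = \infty$). -/
open MeasureTheory Filter Set
open scoped ENNReal NNReal

section AuxLemmas

variable {d : ℕ}

lemma energy_smul_measure {X : Type*} [EMetricSpace X] [MeasurableSpace X] (s : ℝ)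
    {c : ℝ≥0∞} (hc : c ≠ ∞) (μ : Measure X) :
    energy s (c • μ) = c * (c * energy s μ) := by
  simp only [energy, lintegral_smul_measure, smul_eq_mul]
  rw [lintegral_const_mul' _ _ hc]

lemma measurable_energy_kernel (s : ℝ) :
    Measurable fun p : (EuclideanSpace ℝ (Fin d)) × (EuclideanSpace ℝ (Fin d)) =>
      edist p.1 p.2 ^ (-s) :=
  (ENNReal.continuous_rpow_const.comp continuous_edist).measurable

lemma energy_withDensity (s : ℝ) (f : EuclideanSpace ℝ (Fin d) → ℝ≥0∞) (hf : Measurable f) :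
    energy s (volume.withDensity f) =
      ∫⁻ x, f x * ∫⁻ y, f y * edist x y ^ (-s) ∂volume ∂volume := by
  have hK := measurable_energy_kernel (d := d) s
  have h1 : ∀ x, (∫⁻ y, edist x y ^ (-s) ∂(volume.withDensity f)) =
      ∫⁻ y, f y * edist x y ^ (-s) ∂volume := by
    intro x
    have hKx : Measurable fun y : EuclideanSpace ℝ (Fin d) => edist x y ^ (-s) :=
      (ENNReal.continuous_rpow_const.comp (continuous_const.edist continuous_id)).measurable
    rw [lintegral_withDensity_eq_lintegral_mul _ hf hKx]
    rfl
  unfold energy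
  simp_rw [h1]
  have houter : Measurable fun x : EuclideanSpace ℝ (Fin d) =>
      ∫⁻ y, f y * edist x y ^ (-s) ∂volume :=
    Measurable.lintegral_prod_right'
      (f := fun p : (EuclideanSpace ℝ (Fin d)) × (EuclideanSpace ℝ (Fin d)) =>
        f p.2 * edist p.1 p.2 ^ (-s)) ((hf.comp measurable_snd).mul hK)
  rw [lintegral_withDensity_eq_lintegral_mul _ hf houter]
  rfl

lemma energy_withDensity_mono (s : ℝ) {f g : EuclideanSpace ℝ (Fin d) → ℝ≥0∞}
    (hf : Measurable f) (hg : Measurable g) (h : g ≤ f) :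
    energy s (volume.withDensity g) ≤ energy s (volume.withDensity f) := by
  rw [energy_withDensity s g hg, energy_withDensity s f hf]
  exact lintegral_mono fun x =>
    mul_le_mul' (h x) (lintegral_mono fun y => mul_le_mul' (h y) le_rfl)

lemma withDensity_simpleFunc {α : Type*} [MeasurableSpace α] (μ : Measure α)
    (g : SimpleFunc α ℝ≥0∞) :
    μ.withDensity ⇑g =
      ∑ v ∈ g.range.filter (· ≠ 0), v • μ.restrict (⇑g ⁻¹' {v}) := by
  ext A hA
  rw [withDensity_apply _ hA, SimpleFunc.lintegral_eq_lintegral g (μ.restrict A),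
    Measure.finset_sum_apply]
  unfold SimpleFunc.lintegral
  rw [← Finset.sum_filter_of_ne
    (p := fun v => v ≠ 0)
    (f := fun v => v * (μ.restrict A) (⇑g ⁻¹' {v}))
    (fun v _ hv => left_ne_zero_of_mul hv)]
  refine Finset.sum_congr rfl fun v _ => ?_
  rw [Measure.smul_apply, smul_eq_mul, Measure.restrict_apply hA,
    Measure.restrict_apply (g.measurableSet_fiber v), Set.inter_comm]

end AuxLemmas

/-- `Γ_s(E)` equals the infimum of `s`-energies over all Borel probability measures
supported on `E` which are absolutely continuous with respect to Lebesgue measure. -/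
theorem stmt11 (d : ℕ) (s : ℝ) (hs : 0 < s) (hsd : s < d)
    (E : Set (EuclideanSpace ℝ (Fin d))) :
    minRegEnergy s E =
      ⨅ (μ : Measure (EuclideanSpace ℝ (Fin d)))
        (_ : IsProbabilityMeasure μ ∧ μ Eᶜ = 0 ∧ μ ≪ volume), energy s μ := by
  classical
  apply le_antisymm
  · -- `Γ_s(E) ≤` infimum over AC measures
    refine le_iInf fun μ => le_iInf fun hμ => ?_
    obtain ⟨hprob, hcomp, hac⟩ := hμ
    haveI := hprob
    by_cases hE : 0 < volume E
    swap
    · -- the class is empty: contradiction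
      exfalso
      have hE0 : volume E = 0 := by simpa [pos_iff_ne_zero] using hE
      have h1 : μ E = 0 := hac hE0
      have h2 := measure_union_le (μ := μ) E Eᶜ
      rw [union_compl_self, measure_univ, h1, hcomp, add_zero] at h2
      simp at h2
    rw [minRegEnergy, if_pos hE]
    set L := ⨅ (ν : Measure (EuclideanSpace ℝ (Fin d))) (_ : IsRegComb E ν), energy s ν with hL
    -- density of μ
    set f := μ.rnDeriv volume with hf_def
    have hf : Measurable f := Measure.measurable_rnDeriv μ volume
    have hμf : volume.withDensity f = μ := Measure.withDensity_rnDeriv_eq μ volume hac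
    -- a measurable null set containing the part of `{f ≠ 0}` outside `E`
    set B := toMeasurable μ Eᶜ with hB_def
    have hBm : MeasurableSet B := measurableSet_toMeasurable μ Eᶜ
    have hμB : μ B = 0 := by rw [measure_toMeasurable]; exact hcomp
    have hintB : ∫⁻ x in B, f x ∂volume = 0 := by
      rw [← withDensity_apply f hBm, hμf]; exact hμB
    have hae0 : f =ᵐ[volume.restrict B] 0 := (lintegral_eq_zero_iff hf).mp hintB
    have hset : MeasurableSet {x : EuclideanSpace ℝ (Fin d) | f x ≠ 0} :=
      (hf (measurableSet_singleton 0)).compl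
    have hvol0 : volume ({x | f x ≠ 0} ∩ B) = 0 := by
      have h := ae_iff.mp hae0
      simp only [Pi.zero_apply] at h
      rwa [Measure.restrict_apply hset] at h
    set N := toMeasurable volume ({x | f x ≠ 0} ∩ B) with hN_def
    have hNm : MeasurableSet N := measurableSet_toMeasurable _ _
    have hN0 : volume N = 0 := by rw [measure_toMeasurable]; exact hvol0
    -- the modified density
    set f' := Set.indicator Nᶜ f with hf'_def
    have hf' : Measurable f' := hf.indicator hNm.compl
    have hle : f' ≤ f := Set.indicator_le_self _ _
    have hsupp : ∀ x, f' x ≠ 0 → x ∈ E := by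
      intro x hx
      by_contra hxE
      have hxN : x ∈ Nᶜ ∧ f x ≠ 0 := by
        by_cases h : x ∈ Nᶜ
        · exact ⟨h, by simpa [hf'_def, Set.indicator_of_mem h] using hx⟩
        · exact absurd (by simp [hf'_def, Set.indicator_of_notMem h]) hx
      exact hxN.1 (subset_toMeasurable _ _ ⟨hxN.2, subset_toMeasurable μ Eᶜ hxE⟩)
    have hae : f' =ᵐ[volume] f := by
      filter_upwards [compl_mem_ae_iff.mpr hN0] with x hx
      exact Set.indicator_of_mem hx f
    have hint1 : ∫⁻ x, f' x ∂volume = 1 := by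
      rw [lintegral_congr_ae hae, ← setLIntegral_univ,
        ← withDensity_apply f MeasurableSet.univ, hμf, measure_univ]
    -- the simple approximations
    set a : ℕ → ℝ≥0∞ := fun n => ∫⁻ x, SimpleFunc.eapprox f' n x ∂volume with ha_def
    have hg_le_f' : ∀ n x, SimpleFunc.eapprox f' n x ≤ f' x := fun n x => by
      rw [← SimpleFunc.iSup_eapprox_apply hf' x]
      exact le_iSup (fun m => SimpleFunc.eapprox f' m x) n
    have hg_le : ∀ n x, SimpleFunc.eapprox f' n x ≤ f x := fun n x =>
      (hg_le_f' n x).trans (hle x)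
    have ha_le : ∀ n, a n ≤ 1 := fun n => by
      rw [← hint1]; exact lintegral_mono fun x => hg_le_f' n x
    have ha_mono : Monotone a := fun m n hmn =>
      lintegral_mono fun x => SimpleFunc.monotone_eapprox f' hmn x
    have ha_sup : ⨆ n, a n = 1 := by
      rw [ha_def, ← lintegral_iSup (fun n => (SimpleFunc.eapprox f' n).measurable)
        (fun m n hmn x => SimpleFunc.monotone_eapprox f' hmn x)]
      simp_rw [SimpleFunc.iSup_eapprox_apply hf']
      exact hint1
    -- key bound
    have key : ∀ n, a n * (a n * L) ≤ energy s μ := by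
      intro n
      rcases eq_or_ne (a n) 0 with h0 | h0
      · simp [h0]
      have haT : a n ≠ ⊤ := ((ha_le n).trans_lt (by norm_num)).ne
      set g := SimpleFunc.eapprox f' n with hg_def
      set ν := (a n)⁻¹ • volume.withDensity ⇑g with hν_def
      have hwd := withDensity_simpleFunc volume g
      have hν_prob : IsProbabilityMeasure ν := ⟨by
        rw [hν_def, Measure.smul_apply, smul_eq_mul,
          withDensity_apply _ MeasurableSet.univ, setLIntegral_univ]
        exact ENNReal.inv_mul_cancel h0 haT⟩
      -- ν is a regular combination
      set T := g.range.filter (· ≠ 0) with hT_def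
      have hregcomb : IsRegComb E ν := by
        refine ⟨hν_prob, T.card, fun i => (a n)⁻¹ * (T.equivFin.symm i : ℝ≥0∞),
          fun i => ⇑g ⁻¹' {(T.equivFin.symm i : ℝ≥0∞)}, ?_, ?_, ?_, ?_⟩
        · intro i
          have hv : ((T.equivFin.symm i : ℝ≥0∞)) ≠ 0 :=
            (Finset.mem_filter.mp (T.equivFin.symm i).2).2
          exact pos_iff_ne_zero.mpr
            (mul_ne_zero (ENNReal.inv_ne_zero.mpr haT) hv)
        · exact fun i => g.measurableSet_fiber _
        · intro i x hx
          have hv : ((T.equivFin.symm i : ℝ≥0∞)) ≠ 0 :=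
            (Finset.mem_filter.mp (T.equivFin.symm i).2).2
          refine hsupp x fun h0' => hv ?_
          have : g x ≤ f' x := hg_le_f' n x
          rw [h0'] at this
          have : g x = 0 := le_antisymm this zero_le
          rw [Set.mem_preimage, Set.mem_singleton_iff] at hx
          rw [← hx, this]
        · rw [hν_def, hwd, Finset.smul_sum]
          simp_rw [smul_smul]
          rw [← Finset.sum_coe_sort T
            (fun v => ((a n)⁻¹ * (v : ℝ≥0∞)) • volume.restrict (⇑g ⁻¹' {(v : ℝ≥0∞)}))]
          exact (Equiv.sum_comp T.equivFin.symm
            (fun v : T => ((a n)⁻¹ * (v : ℝ≥0∞)) • volume.restrict (⇑g ⁻¹' {(v : ℝ≥0∞)}))).symm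
      have hinvT : (a n)⁻¹ ≠ ⊤ := by
        simpa [ENNReal.inv_eq_top] using h0
      have hle1 : L ≤ energy s ν := iInf₂_le ν hregcomb
      have hν_energy : energy s ν
          = (a n)⁻¹ * ((a n)⁻¹ * energy s (volume.withDensity ⇑g)) :=
        energy_smul_measure s hinvT _
      have hmono : energy s (volume.withDensity ⇑g) ≤ energy s μ := by
        rw [← hμf]
        exact energy_withDensity_mono s hf g.measurable (hg_le n)
      have : L ≤ (a n)⁻¹ * ((a n)⁻¹ * energy s μ) := by
        refine hle1.trans ?_
        rw [hν_energy]
        exact mul_le_mul' le_rfl (mul_le_mul' le_rfl hmono)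
      calc a n * (a n * L) ≤ a n * (a n * ((a n)⁻¹ * ((a n)⁻¹ * energy s μ))) :=
            mul_le_mul' le_rfl (mul_le_mul' le_rfl this)
        _ = energy s μ := by
            rw [← mul_assoc (a n) ((a n)⁻¹), ENNReal.mul_inv_cancel h0 haT, one_mul,
              ← mul_assoc (a n) ((a n)⁻¹), ENNReal.mul_inv_cancel h0 haT, one_mul]
    -- take the supremum over n
    have hsup_le : (⨆ n, a n * (a n * L)) ≤ energy s μ := iSup_le key
    have hsq : ⨆ n, a n * a n = 1 := by
      apply le_antisymm
      · exact iSup_le fun n => mul_le_one' (ha_le n) (ha_le n)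
      · calc (1:ℝ≥0∞) = (⨆ n, a n) * (⨆ m, a m) := by rw [ha_sup, one_mul]
          _ = ⨆ n, ⨆ m, a n * a m := by
              rw [ENNReal.iSup_mul]; exact iSup_congr fun n => ENNReal.mul_iSup _ _
          _ ≤ ⨆ k, a k * a k := iSup_le fun n => iSup_le fun m =>
              le_iSup_of_le (max n m)
                (mul_le_mul' (ha_mono (le_max_left n m)) (ha_mono (le_max_right n m)))
    have : (⨆ n, a n * (a n * L)) = L := by
      simp_rw [← mul_assoc]
      rw [← ENNReal.iSup_mul, hsq, one_mul]
    rwa [this] at hsup_le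
  · -- infimum over AC measures `≤ Γ_s(E)`
    rw [minRegEnergy]
    split_ifs with hE
    · refine le_iInf fun ν => le_iInf fun hν => ?_
      obtain ⟨hprob, k, c, F, hc, hFm, hFE, hsum⟩ := hν
      refine iInf₂_le ν ⟨hprob, ?_, ?_⟩
      · rw [hsum, Measure.finset_sum_apply]
        refine Finset.sum_eq_zero fun i _ => ?_
        rw [Measure.smul_apply, Measure.restrict_apply' (hFm i)]
        have : Eᶜ ∩ F i = ∅ := by
          ext x; simp only [Set.mem_inter_iff, Set.mem_compl_iff, Set.mem_empty_iff_false,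
            iff_false, not_and]
          exact fun hx hxF => hx (hFE i hxF)
        rw [this, measure_empty, smul_zero]
      · intro A hA
        rw [hsum, Measure.finset_sum_apply]
        refine Finset.sum_eq_zero fun i _ => ?_
        rw [Measure.smul_apply, Measure.restrict_apply' (hFm i)]
        have : volume (A ∩ F i) = 0 :=
          measure_mono_null (Set.inter_subset_left) hA
        rw [this, smul_zero]
    · exact le_top
end
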